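/- For all positive integers m and n, T(m,n) = Σ_{r≥1} (-1)^(r-1) · (r²/(m·n)) · binom(2m, m+r) · binom(2n, n+r), where the sum is over 1 ≤ r ≤ min(m,n). -/

import Mathlib

/-- The super Catalan number `T(m,n)` as a rational number. -/
def T (m n : ℕ) : ℚ :=
  (Nat.factorial (2 * m) * Nat.factorial (2 * n) : ℚ) /
    (2 * (Nat.factorial m * Nat.factorial n * Nat.factorial (m + n)))

namespace SCAux

open Finset Function

/-- Extended binomial coefficient with integer lower index. -/
def c (N : ℕ) (j : ℤ) : ℚ := if 0 ≤ j then (N.choose j.toNat : ℚ) else 0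

lemma c_of_nonneg {N : ℕ} {j : ℤ} (h : 0 ≤ j) : c N j = N.choose j.toNat := if_pos h

lemma c_neg {N : ℕ} {j : ℤ} (h : j < 0) : c N j = 0 := if_neg (by omega)

lemma c_gt {N : ℕ} {j : ℤ} (h : (N : ℤ) < j) : c N j = 0 := by
  rw [c, if_pos (by omega), Nat.choose_eq_zero_of_lt (by omega), Nat.cast_zero]

lemma c_symm (N : ℕ) (j : ℤ) : c N ((N : ℤ) - j) = c N j := by
  rcases lt_or_ge j 0 with h | h
  · rw [c_neg h, c_gt (by omega)]
  rcases lt_or_ge (N : ℤ) j with h2 | h2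
  · rw [c_gt h2, c_neg (by omega)]
  · rw [c_of_nonneg h, c_of_nonneg (by omega)]
    congr 1
    have h3 : ((N : ℤ) - j).toNat = N - j.toNat := by omega
    rw [h3, Nat.choose_symm (by omega)]

lemma c_pascal (N : ℕ) (j : ℤ) : c (N + 1) j = c N (j - 1) + c N j := by
  rcases lt_or_ge j 0 with h | h
  · rw [c_neg h, c_neg (by omega), c_neg h]; ring
  rcases eq_or_lt_of_le h with h0 | h0
  · rw [← h0]; simp [c, c_neg]
  · rw [c_of_nonneg h, c_of_nonneg (by omega), c_of_nonneg h]
    have h1 : j.toNat = (j - 1).toNat + 1 := by omega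
    rw [h1, Nat.choose_succ_succ']
    push_cast; ring

/-- `A m k = C(2m, m+k)` -/
def A (m : ℕ) (k : ℤ) : ℚ := c (2 * m) ((m : ℤ) + k)

lemma A_eq_zero {m : ℕ} {k : ℤ} (h : (m : ℤ) < k ∨ k < -(m : ℤ)) : A m k = 0 := by
  rcases h with h | h
  · exact c_gt (by omega)
  · exact c_neg (by omega)

lemma A_neg (m : ℕ) (k : ℤ) : A m (-k) = A m k := by
  have h := c_symm (2 * m) ((m : ℤ) + k)
  rw [A, A]
  rw [show ((m : ℤ) + -k) = ((2 * m : ℕ) : ℤ) - ((m : ℤ) + k) by push_cast; ring, h]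

/-- `a m k = C(2m-1, m+k)` -/
def a (m : ℕ) (k : ℤ) : ℚ := c (2 * m - 1) ((m : ℤ) + k)

lemma a_eq_zero {m : ℕ} (hm : 0 < m) {k : ℤ} (h : (m : ℤ) ≤ k ∨ k < -(m : ℤ)) :
    a m k = 0 := by
  rcases h with h | h
  · exact c_gt (by omega)
  · exact c_neg (by omega)

lemma A_pascal {m : ℕ} (hm : 0 < m) (k : ℤ) : A m k = a m (k - 1) + a m k := by
  show c (2 * m) ((m : ℤ) + k)
      = c (2 * m - 1) ((m : ℤ) + (k - 1)) + c (2 * m - 1) ((m : ℤ) + k)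
  conv_lhs => rw [show 2 * m = (2 * m - 1) + 1 by omega]
  rw [c_pascal, show (m : ℤ) + k - 1 = (m : ℤ) + (k - 1) by ring]

/-- The absorption-type identity `k·C(2m,m+k) = m·(C(2m-1,m+k-1) - C(2m-1,m+k))`. -/
lemma absorption {m : ℕ} (hm : 0 < m) (k : ℤ) :
    (k : ℚ) * A m k = (m : ℚ) * (a m (k - 1) - a m k) := by
  rcases lt_or_ge k (-(m : ℤ)) with h | h
  · rw [A_eq_zero (Or.inr h), a_eq_zero hm (Or.inr (by omega)), a_eq_zero hm (Or.inr h)]; ring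
  rcases lt_or_ge (m : ℤ) k with h2 | h2
  · rw [A_eq_zero (Or.inl h2), a_eq_zero hm (Or.inl (by omega)), a_eq_zero hm (Or.inl h2.le)]; ring
  -- now -m ≤ k ≤ m
  rcases eq_or_lt_of_le h with h0 | h0
  · -- k = -m
    have hk : k = -(m : ℤ) := h0.symm
    have hA1 : A m (-(m : ℤ)) = 1 := by
      rw [A, show (m : ℤ) + -(m : ℤ) = 0 by ring, c_of_nonneg le_rfl]
      simp
    have ha2 : a m (-(m : ℤ)) = 1 := by
      rw [a, show (m : ℤ) + -(m : ℤ) = 0 by ring, c_of_nonneg le_rfl]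
      simp
    have ha3 : a m (-(m : ℤ) - 1) = 0 := by
      rw [a]; exact c_neg (by omega)
    rw [hk, hA1, ha2, ha3]
    push_cast; ring
  · -- -m < k ≤ m, so j = (m+k).toNat ≥ 1
    set j : ℕ := ((m : ℤ) + k).toNat with hjdef
    have hj1 : 1 ≤ j := by omega
    have hA : A m k = ((2 * m).choose j : ℚ) := by rw [A, c_of_nonneg (by omega)]
    have ha2 : a m k = ((2 * m - 1).choose j : ℚ) := by rw [a, c_of_nonneg (by omega)]
    have ha1 : a m (k - 1) = ((2 * m - 1).choose (j - 1) : ℚ) := by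
      rw [a, c_of_nonneg (by omega)]
      congr 2
      omega
    have e1 : 2 * m * (2 * m - 1).choose (j - 1) = (2 * m).choose j * j := by
      have h5 := Nat.add_one_mul_choose_eq (2 * m - 1) (j - 1)
      rw [show 2 * m - 1 + 1 = 2 * m by omega, show j - 1 + 1 = j by omega] at h5
      exact h5
    have e2 : (2 * m).choose j = (2 * m - 1).choose (j - 1) + (2 * m - 1).choose j := by
      have h5 := Nat.choose_succ_succ' (2 * m - 1) (j - 1)
      rw [show 2 * m - 1 + 1 = 2 * m by omega, show j - 1 + 1 = j by omega] at h5
      exact h5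
    have e1q : 2 * (m : ℚ) * ((2 * m - 1).choose (j - 1) : ℚ)
        = ((2 * m).choose j : ℚ) * (j : ℚ) := by exact_mod_cast congrArg (Nat.cast : ℕ → ℚ) e1
    have e2q : ((2 * m).choose j : ℚ)
        = ((2 * m - 1).choose (j - 1) : ℚ) + ((2 * m - 1).choose j : ℚ) := by
      exact_mod_cast congrArg (Nat.cast : ℕ → ℚ) e2
    have hk : (k : ℚ) = (j : ℚ) - (m : ℚ) := by
      have h6 : k = (j : ℤ) - (m : ℤ) := by omega
      exact_mod_cast congrArg (Int.cast : ℤ → ℚ) h6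
    rw [hA, ha1, ha2, hk]
    linear_combination (-1 : ℚ) * e1q - (m : ℚ) * e2q

/-- sign function -/
def s (k : ℤ) : ℚ := if Even k then 1 else -1

lemma s_add_one (k : ℤ) : s (k + 1) = -s k := by
  by_cases h : Even k <;> simp [s, Int.even_add_one, h]

lemma s_sub_one (k : ℤ) : s (k - 1) = -s k := by
  by_cases h : Even k <;> simp [s, Int.even_sub_one, h]

lemma s_neg (k : ℤ) : s (-k) = s k := by simp [s]

noncomputable def F (m n : ℕ) : ℚ := ∑ᶠ k : ℤ, s k * A m k * A n k

lemma supp_finite {f : ℤ → ℚ} (B : ℕ)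
    (h : ∀ k : ℤ, (B : ℤ) < k ∨ k < -(B : ℤ) → f k = 0) : (support f).Finite := by
  apply Set.Finite.subset (Set.finite_Icc (-(B : ℤ)) (B : ℤ))
  intro k hk
  simp only [mem_support] at hk
  simp only [Set.mem_Icc]
  by_contra hc
  exact hk (h k (by omega))

lemma reflect_zero {g : ℤ → ℚ} {d : ℤ} (h : ∀ k, g (d - k) = -g k) :
    ∑ᶠ k : ℤ, g k = 0 := by
  have h1 : (∑ᶠ k : ℤ, g ((Equiv.subLeft d) k)) = ∑ᶠ k : ℤ, g k :=
    finsum_comp_equiv (Equiv.subLeft d)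
  simp only [Equiv.subLeft_apply] at h1
  have h2 : (∑ᶠ k : ℤ, g (d - k)) = ∑ᶠ k : ℤ, -g k := finsum_congr h
  rw [h2, finsum_neg_distrib] at h1
  linarith

lemma shift_invar (u : ℤ → ℚ) : (∑ᶠ k : ℤ, u (k - 1)) = ∑ᶠ k : ℤ, u k := by
  have h1 : (∑ᶠ k : ℤ, u ((Equiv.subRight (1 : ℤ)) k)) = ∑ᶠ k : ℤ, u k :=
    finsum_comp_equiv (Equiv.subRight 1)
  simpa using h1

lemma F_zero (n : ℕ) : F 0 n = ((2 * n).choose n : ℚ) := by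
  rw [F]
  have h : ∀ k : ℤ, k ≠ 0 → s k * A 0 k * A n k = 0 := by
    intro k hk
    have h1 : A 0 k = 0 := A_eq_zero (by omega)
    rw [h1]; ring
  rw [finsum_eq_single _ 0 h]
  have h1 : A 0 0 = 1 := by rw [A, c_of_nonneg (by norm_num)]; norm_num
  have h2 : A n 0 = ((2 * n).choose n : ℚ) := by
    rw [A, c_of_nonneg (by positivity)]
    norm_num
  rw [h1, h2]
  simp [s]

lemma F_rec (m n : ℕ) : F (m + 1) n + F m (n + 1) = 4 * F m n := by
  have hA : ∀ (m : ℕ) (k : ℤ), A (m + 1) k = A m (k - 1) + 2 * A m k + A m (k + 1) := by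
    intro m k
    show c (2 * (m + 1)) (((m + 1 : ℕ) : ℤ) + k)
        = c (2 * m) ((m : ℤ) + (k - 1)) + 2 * c (2 * m) ((m : ℤ) + k)
          + c (2 * m) ((m : ℤ) + (k + 1))
    rw [show 2 * (m + 1) = (2 * m + 1) + 1 by ring, c_pascal, c_pascal, c_pascal,
      show ((m + 1 : ℕ) : ℤ) + k - 1 - 1 = (m : ℤ) + (k - 1) by push_cast; ring,
      show ((m + 1 : ℕ) : ℤ) + k - 1 = (m : ℤ) + k by push_cast; ring,
      show ((m + 1 : ℕ) : ℤ) + k = (m : ℤ) + (k + 1) by push_cast; ring]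
    ring
  have hF1 : F (m + 1) n = ∑ᶠ k : ℤ, s k * (A m (k - 1) + 2 * A m k + A m (k + 1)) * A n k := by
    rw [F]; exact finsum_congr fun k => by rw [hA m k]
  have hF2 : F m (n + 1) = ∑ᶠ k : ℤ, s k * A m k * (A n (k - 1) + 2 * A n k + A n (k + 1)) := by
    rw [F]; exact finsum_congr fun k => by rw [hA n k]
  set P : ℤ → ℚ := fun k => s k * A m k * A n k with hP
  set p : ℤ → ℚ := fun k => s k * (A m (k + 1) * A n k + A m k * A n (k + 1)) with hp
  set q : ℤ → ℚ := fun k => s k * (A m (k - 1) * A n k + A m k * A n (k - 1)) with hq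
  have hsupP : (support P).Finite := by
    apply supp_finite m
    intro k hk
    have h1 : A m k = 0 := A_eq_zero (by omega)
    simp only [hP, h1]; ring
  have hsupp : (support p).Finite := by
    apply supp_finite (m + 1)
    intro k hk
    have h1 : A m (k + 1) = 0 := A_eq_zero (by omega)
    have h2 : A m k = 0 := A_eq_zero (by omega)
    simp only [hp, h1, h2]; ring
  have hsupq : (support q).Finite := by
    apply supp_finite (m + 1)
    intro k hk
    have h1 : A m (k - 1) = 0 := A_eq_zero (by omega)
    have h2 : A m k = 0 := A_eq_zero (by omega)
    simp only [hq, h1, h2]; ring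
  have hsum : F (m + 1) n + F m (n + 1) = ∑ᶠ k : ℤ, (4 * P k + (p k + q k)) := by
    rw [hF1, hF2, ← finsum_add_distrib]
    · exact finsum_congr fun k => by simp only [hP, hp, hq]; ring
    · apply supp_finite n
      intro k hk
      have h1 : A n k = 0 := A_eq_zero (by omega)
      rw [h1]; ring
    · apply supp_finite m
      intro k hk
      have h1 : A m k = 0 := A_eq_zero (by omega)
      rw [h1]; ring
  have hpz : (∑ᶠ k : ℤ, p k) = 0 := by
    apply reflect_zero (d := -1)
    intro k
    simp only [hp]
    rw [show (-1 : ℤ) - k + 1 = -k by ring, show (-1 : ℤ) - k = -(k + 1) by ring,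
      A_neg, A_neg, A_neg, A_neg, s_neg, s_add_one]
    ring
  have hqz : (∑ᶠ k : ℤ, q k) = 0 := by
    apply reflect_zero (d := 1)
    intro k
    simp only [hq]
    rw [show (1 : ℤ) - k - 1 = -k by ring, show (1 : ℤ) - k = -(k - 1) by ring,
      A_neg, A_neg, A_neg, A_neg, s_neg, s_sub_one]
    ring
  have hsup4P : (support fun k : ℤ => 4 * P k).Finite := by
    apply supp_finite m
    intro k hk
    have h1 : A m k = 0 := A_eq_zero (by omega)
    simp only [hP, h1]; ring
  have hsuppq : (support fun k : ℤ => p k + q k).Finite :=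
    (hsupp.union hsupq).subset (support_add _ _)
  rw [hsum, finsum_add_distrib hsup4P hsuppq, finsum_add_distrib hsupp hsupq, hpz, hqz,
    ← mul_finsum _ _]
  rw [F]
  ring

lemma T_rec (m n : ℕ) : T (m + 1) n + T m (n + 1) = 4 * T m n := by
  have f2 : ∀ j : ℕ, ((j + 1).factorial : ℚ) = (j + 1) * (j.factorial : ℚ) := by
    intro j; rw [Nat.factorial_succ]; push_cast; ring
  have h1 : ((2 * (m + 1)).factorial : ℚ)
      = (2 * m + 2) * (2 * m + 1) * ((2 * m).factorial : ℚ) := by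
    rw [show 2 * (m + 1) = (2 * m + 1) + 1 by ring, f2, f2]; push_cast; ring
  have h2 : ((2 * (n + 1)).factorial : ℚ)
      = (2 * n + 2) * (2 * n + 1) * ((2 * n).factorial : ℚ) := by
    rw [show 2 * (n + 1) = (2 * n + 1) + 1 by ring, f2, f2]; push_cast; ring
  have h3 : ((m + 1).factorial : ℚ) = (m + 1) * (m.factorial : ℚ) := f2 m
  have h4 : ((n + 1).factorial : ℚ) = (n + 1) * (n.factorial : ℚ) := f2 n
  have h5 : (((m + 1) + n).factorial : ℚ) = (m + n + 1) * ((m + n).factorial : ℚ) := by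
    rw [show (m + 1) + n = (m + n) + 1 by ring, f2]; push_cast; ring
  have h6 : ((m + (n + 1)).factorial : ℚ) = (m + n + 1) * ((m + n).factorial : ℚ) := by
    rw [show m + (n + 1) = (m + n) + 1 by ring, f2]; push_cast; ring
  rw [T, T, T, h1, h2, h3, h4, h5, h6]
  have hm : (m.factorial : ℚ) ≠ 0 := by exact_mod_cast m.factorial_ne_zero
  have hn : (n.factorial : ℚ) ≠ 0 := by exact_mod_cast n.factorial_ne_zero
  have hmn : ((m + n).factorial : ℚ) ≠ 0 := by exact_mod_cast (m + n).factorial_ne_zero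
  have hm1 : ((m : ℚ) + 1) ≠ 0 := by positivity
  have hn1 : ((n : ℚ) + 1) ≠ 0 := by positivity
  have hmn1 : ((m : ℚ) + n + 1) ≠ 0 := by positivity
  field_simp
  ring

lemma F_eq_T (m : ℕ) : ∀ n : ℕ, F m n = 2 * T m n := by
  induction m with
  | zero =>
    intro n
    have hn : (n.factorial : ℚ) ≠ 0 := by exact_mod_cast n.factorial_ne_zero
    have hT : T 0 n = ((2 * n).factorial : ℚ) / (2 * ((n.factorial : ℚ) * n.factorial)) := by
      rw [T]
      norm_num
    rw [F_zero, Nat.cast_choose ℚ (show n ≤ 2 * n by omega), show 2 * n - n = n by omega, hT]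
    field_simp
  | succ m ih =>
    intro n
    have hF := F_rec m n
    have hT := T_rec m n
    rw [ih n, ih (n + 1)] at hF
    linarith

lemma weighted_eq_F (m n : ℕ) (hm : 0 < m) (hn : 0 < n) :
    (∑ᶠ k : ℤ, s (k - 1) * ((k : ℚ) ^ 2 / ((m : ℚ) * n)) * A m k * A n k) = F m n := by
  set u : ℤ → ℚ := fun k => 2 * s k * a m k * a n k with hu
  have hmq : (m : ℚ) ≠ 0 := by positivity
  have hnq : (n : ℚ) ≠ 0 := by positivity
  have key : ∀ k : ℤ, s (k - 1) * ((k : ℚ) ^ 2 / ((m : ℚ) * n)) * A m k * A n k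
      = s k * A m k * A n k + (u (k - 1) - u k) := by
    intro k
    have hX := absorption hm k
    have hY := absorption hn k
    have hPm := A_pascal hm k
    have hPn := A_pascal hn k
    have h2 : (k : ℚ) ^ 2 * (A m k * A n k)
        = ((m : ℚ) * n) * ((a m (k - 1) - a m k) * (a n (k - 1) - a n k)) := by
      linear_combination ((k : ℚ) * A n k) * hX + ((m : ℚ) * (a m (k - 1) - a m k)) * hY
    have h3 : (k : ℚ) ^ 2 / ((m : ℚ) * n) * (A m k * A n k)
        = (a m (k - 1) - a m k) * (a n (k - 1) - a n k) := by
      rw [div_mul_eq_mul_div, h2, mul_comm ((m : ℚ) * n) _, mul_div_assoc,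
        div_self (mul_ne_zero hmq hnq), mul_one]
    calc s (k - 1) * ((k : ℚ) ^ 2 / ((m : ℚ) * n)) * A m k * A n k
        = s (k - 1) * ((k : ℚ) ^ 2 / ((m : ℚ) * n) * (A m k * A n k)) := by ring
      _ = s (k - 1) * ((a m (k - 1) - a m k) * (a n (k - 1) - a n k)) := by rw [h3]
      _ = s k * A m k * A n k + (u (k - 1) - u k) := by
          rw [hPm, hPn]
          simp only [hu]
          rw [s_sub_one]
          ring
  rw [finsum_congr key]
  have hsP : (support fun k : ℤ => s k * A m k * A n k).Finite := by
    apply supp_finite m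
    intro k hk
    have h1 : A m k = 0 := A_eq_zero (by omega)
    rw [h1]; ring
  have hsu : (support u).Finite := by
    apply supp_finite m
    intro k hk
    have h1 : a m k = 0 := a_eq_zero hm (by omega)
    simp only [hu, h1]; ring
  have hsu' : (support fun k : ℤ => u (k - 1)).Finite := by
    apply supp_finite (m + 1)
    intro k hk
    have h1 : a m (k - 1) = 0 := a_eq_zero hm (by omega)
    simp only [hu, h1]; ring
  have hsd : (support fun k : ℤ => u (k - 1) - u k).Finite := by
    apply supp_finite (m + 1)
    intro k hk
    have h1 : a m (k - 1) = 0 := a_eq_zero hm (by omega)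
    have h2 : a m k = 0 := a_eq_zero hm (by omega)
    simp only [hu, h1, h2]; ring
  rw [finsum_add_distrib hsP hsd, finsum_sub_distrib hsu' hsu, shift_invar, F]
  ring

end SCAux

theorem T_eq_alternating_sum (m n : ℕ) (hm : 0 < m) (hn : 0 < n) :
    T m n = ∑ r ∈ Finset.Icc 1 (min m n),
      (-1 : ℚ) ^ (r - 1) * ((r : ℚ) ^ 2 / (m * n)) *
        (Nat.choose (2 * m) (m + r)) * (Nat.choose (2 * n) (n + r)) := by
  classical
  open SCAux in
  set μ : ℕ := min m n with hμ
  set f : ℤ → ℚ := fun k => SCAux.s (k - 1) * ((k : ℚ) ^ 2 / ((m : ℚ) * n))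
      * SCAux.A m k * SCAux.A n k with hf
  have hfzero : ∀ k : ℤ, ((μ : ℤ) < k ∨ k < -(μ : ℤ)) → f k = 0 := by
    intro k hk
    have hcase : ((m : ℤ) < k ∨ k < -(m : ℤ)) ∨ ((n : ℤ) < k ∨ k < -(n : ℤ)) := by
      simp only [hμ] at hk
      omega
    rcases hcase with h | h
    · have h1 : SCAux.A m k = 0 := SCAux.A_eq_zero h
      simp only [hf, h1]; ring
    · have h1 : SCAux.A n k = 0 := SCAux.A_eq_zero h
      simp only [hf, h1]; ring
  have hfin : (∑ᶠ k : ℤ, f k) = ∑ k ∈ Finset.Icc (-(μ : ℤ)) (μ : ℤ), f k := by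
    apply finsum_eq_sum_of_support_subset
    intro k hk
    simp only [Function.mem_support] at hk
    simp only [Finset.coe_Icc, Set.mem_Icc]
    by_contra hc
    exact hk (hfzero k (by omega))
  have hfeven : ∀ k : ℤ, f (-k) = f k := by
    intro k
    simp only [hf]
    rw [show -k - 1 = -(k + 1) by ring, SCAux.s_neg, SCAux.s_add_one, SCAux.s_sub_one,
      SCAux.A_neg, SCAux.A_neg]
    push_cast
    ring
  have hsplit : Finset.Icc (-(μ : ℤ)) (μ : ℤ)
      = Finset.Icc (-(μ : ℤ)) (-1) ∪ Finset.Icc 0 (μ : ℤ) := by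
    ext x; simp only [Finset.mem_Icc, Finset.mem_union]; omega
  have hdisj : Disjoint (Finset.Icc (-(μ : ℤ)) (-1)) (Finset.Icc 0 (μ : ℤ)) := by
    simp only [Finset.disjoint_left, Finset.mem_Icc]
    intro x hx hx2; omega
  have hμ1 : 1 ≤ μ := by omega
  have h0 : (∑ k ∈ Finset.Icc (0 : ℤ) (μ : ℤ), f k) = ∑ k ∈ Finset.Icc (1 : ℤ) (μ : ℤ), f k := by
    symm
    apply Finset.sum_subset
    · intro x hx; simp only [Finset.mem_Icc] at hx ⊢; omega
    · intro x hx hnx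
      simp only [Finset.mem_Icc] at hx hnx
      have hx0 : x = 0 := by omega
      subst hx0
      simp [hf]
  have hneg : (∑ k ∈ Finset.Icc (-(μ : ℤ)) (-1), f k)
      = ∑ k ∈ Finset.Icc (1 : ℤ) (μ : ℤ), f k := by
    apply Finset.sum_nbij' (i := fun k : ℤ => -k) (j := fun k : ℤ => -k)
    · intro x hx; simp only [Finset.mem_Icc] at hx ⊢; omega
    · intro x hx; simp only [Finset.mem_Icc] at hx ⊢; omega
    · intro x _; ring
    · intro x _; ring
    · intro x _
      rw [show f x = f (- -x) by ring_nf, hfeven (-x)]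
  have htotal : (∑ᶠ k : ℤ, f k) = 2 * ∑ k ∈ Finset.Icc (1 : ℤ) (μ : ℤ), f k := by
    rw [hfin, hsplit, Finset.sum_union hdisj, h0, hneg]; ring
  have hterm : (∑ k ∈ Finset.Icc (1 : ℤ) (μ : ℤ), f k)
      = ∑ r ∈ Finset.Icc 1 μ,
        (-1 : ℚ) ^ (r - 1) * ((r : ℚ) ^ 2 / (m * n)) *
          (Nat.choose (2 * m) (m + r)) * (Nat.choose (2 * n) (n + r)) := by
    apply Finset.sum_nbij' (i := fun k : ℤ => k.toNat) (j := fun r : ℕ => (r : ℤ))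
    · intro x hx; simp only [Finset.mem_Icc] at hx ⊢; omega
    · intro x hx; simp only [Finset.mem_Icc] at hx ⊢; omega
    · intro x hx; simp only [Finset.mem_Icc] at hx; omega
    · intro x hx; simp only [Finset.mem_Icc] at hx; omega
    · intro x hx
      simp only [Finset.mem_Icc] at hx
      set r : ℕ := x.toNat with hr
      have hxr : x = (r : ℤ) := by omega
      have hr1 : 1 ≤ r := by omega
      have hAm : SCAux.A m x = (Nat.choose (2 * m) (m + r) : ℚ) := by
        rw [SCAux.A, SCAux.c_of_nonneg (by omega)]
        congr 2
        omega
      have hAn : SCAux.A n x = (Nat.choose (2 * n) (n + r) : ℚ) := by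
        rw [SCAux.A, SCAux.c_of_nonneg (by omega)]
        congr 2
        omega
      have hs : SCAux.s (x - 1) = (-1 : ℚ) ^ (r - 1) := by
        have hx1 : x - 1 = ((r - 1 : ℕ) : ℤ) := by omega
        rw [hx1, SCAux.s]
        by_cases he : Even (r - 1)
        · rw [if_pos (by exact_mod_cast (Int.even_coe_nat _).mpr he), he.neg_one_pow]
        · rw [if_neg (by simpa [Int.even_coe_nat] using he),
            (Nat.not_even_iff_odd.mp he).neg_one_pow]
      simp only [hf]
      rw [hs, hAm, hAn, hxr]
      push_cast
      ring
  have hW := SCAux.weighted_eq_F m n hm hn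
  have hWf : (∑ᶠ k : ℤ, f k) = SCAux.F m n := hW
  rw [SCAux.F_eq_T m n, htotal, hterm] at hWf
  linarith
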